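/- Fix a constant c > √2 and define p_k = 1 if k ≤ 16c²·log n, and p_k = 1/2 + c·√((log n)/k) otherwise. Let w be a random binary word of length n with independent letters, where w_k = 1 with probability p_k. Then for all sufficiently large n and all integers k, j with 16c²·log n < k ≤ j ≤ n−k, the probability that |w[1,k]|₁ < |w[j+1,j+k]|₁ is at most exp(−c²·log n) = n^(−c²). -/

import Mathlib

/-- Number of ones of the infinite binary word `w` in the 0-indexed
half-open interval of positions `[a, b)`. Thus `cnt w j (j+k)` is the number
of 1s in the subword `w[j+1, j+k]` (1-indexed), and `cnt w 0 k` is the number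
of 1s in the prefix of length `k`. -/
def cnt (w : ℕ → Bool) (a b : ℕ) : ℕ :=
  ((Finset.Ico a b).filter (fun i => w i = true)).card

/-- Extend a binary word of length `n` to an infinite word by `false`s. -/
def ext {n : ℕ} (w : Fin n → Bool) : ℕ → Bool :=
  fun i => if h : i < n then w ⟨i, h⟩ else false

/-- The probability `p_k` that the `k`-th letter (1-indexed) of the random
word of length `n` equals `1`: equal to `1` if `k ≤ 16 c² log n`, and to
`1/2 + c √(log n / k)` otherwise. Logarithms are natural. -/
noncomputable def pr (c : ℝ) (n k : ℕ) : ℝ :=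
  if (k : ℝ) ≤ 16 * c ^ 2 * Real.log n then 1
  else 1 / 2 + c * Real.sqrt (Real.log n / k)

/-- The probability of picking the word `w : Fin n → Bool` when the letters
are independent with `P(w_k = 1) = p_k` (positions 1-indexed). -/
noncomputable def wordProb (c : ℝ) (n : ℕ) (w : Fin n → Bool) : ℝ :=
  ∏ i : Fin n, (if w i then pr c n (i.1 + 1) else 1 - pr c n (i.1 + 1))




private lemma inv_sqrt_le_step (x : ℝ) (hx : 0 ≤ x) :
    1 / Real.sqrt (x+1) ≤ 2*(Real.sqrt (x+1) - Real.sqrt x) := by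
  have h1 : Real.sqrt x * Real.sqrt (x+1) ≤ x + 1/2 := by
    rw [← Real.sqrt_mul hx]
    calc Real.sqrt (x*(x+1)) ≤ Real.sqrt ((x+1/2)^2) := Real.sqrt_le_sqrt (by nlinarith)
      _ = x + 1/2 := Real.sqrt_sq (by linarith)
  have h2 : 0 < Real.sqrt (x+1) := Real.sqrt_pos.mpr (by linarith)
  rw [div_le_iff₀ h2]
  have h3 : Real.sqrt (x+1) * Real.sqrt (x+1) = x+1 := Real.mul_self_sqrt (by linarith)
  nlinarith

private lemma step_le_inv_sqrt (x : ℝ) (hx : 0 ≤ x) :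
    2*(Real.sqrt (x+2) - Real.sqrt (x+1)) ≤ 1 / Real.sqrt (x+1) := by
  have h1 : Real.sqrt (x+1) * Real.sqrt (x+2) ≤ x + 3/2 := by
    rw [← Real.sqrt_mul (by linarith)]
    calc Real.sqrt ((x+1)*(x+2)) ≤ Real.sqrt ((x+3/2)^2) := Real.sqrt_le_sqrt (by nlinarith)
      _ = x + 3/2 := Real.sqrt_sq (by linarith)
  have h2 : 0 < Real.sqrt (x+1) := Real.sqrt_pos.mpr (by linarith)
  rw [le_div_iff₀ h2]
  have h3 : Real.sqrt (x+1) * Real.sqrt (x+1) = x+1 := Real.mul_self_sqrt (by linarith)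
  nlinarith

private lemma sum_inv_sqrt_lb (a b : ℕ) (hab : a ≤ b) :
    2*(Real.sqrt (b+1) - Real.sqrt (a+1)) ≤ ∑ i ∈ Finset.Ico a b, 1/Real.sqrt (i+1) := by
  induction b, hab using Nat.le_induction with
  | base => simp
  | succ b hab ih =>
    rw [Finset.sum_Ico_succ_top hab]
    have h := step_le_inv_sqrt (b : ℝ) (by positivity)
    push_cast
    push_cast at ih h
    rw [show ((b:ℝ)+1+1) = (b:ℝ)+2 by ring]
    linarith

private lemma sum_inv_sqrt_ub (a b : ℕ) (hab : a ≤ b) :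
    ∑ i ∈ Finset.Ico a b, 1/Real.sqrt (i+1) ≤ 2*(Real.sqrt b - Real.sqrt a) := by
  induction b, hab using Nat.le_induction with
  | base => simp
  | succ b hab ih =>
    rw [Finset.sum_Ico_succ_top hab]
    have h := inv_sqrt_le_step (b:ℝ) (by positivity)
    push_cast
    push_cast at ih h
    linarith

private lemma sqrt_window {k j : ℝ} (hk : 0 ≤ k) (hkj : k ≤ j) :
    Real.sqrt (j+k) - Real.sqrt j ≤ Real.sqrt (2*k) - Real.sqrt k := by
  have hj : 0 ≤ j := le_trans hk hkj
  have e1 : Real.sqrt (j+k) * Real.sqrt k = Real.sqrt ((j+k)*k) := (Real.sqrt_mul (by linarith) k).symm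
  have e2 : Real.sqrt (2*k) * Real.sqrt j = Real.sqrt ((2*k)*j) := (Real.sqrt_mul (by linarith) j).symm
  have h1 : Real.sqrt ((j+k)*k) ≤ Real.sqrt ((2*k)*j) := Real.sqrt_le_sqrt (by nlinarith)
  have s1 := Real.sq_sqrt (show (0:ℝ) ≤ j+k by linarith)
  have s2 := Real.sq_sqrt hk
  have s3 := Real.sq_sqrt (show (0:ℝ) ≤ 2*k by linarith)
  have s4 := Real.sq_sqrt hj
  have hsq : (Real.sqrt (j+k) + Real.sqrt k)^2 ≤ (Real.sqrt (2*k) + Real.sqrt j)^2 := by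
    nlinarith [e1, e2, h1]
  have n1 : 0 ≤ Real.sqrt (j+k) + Real.sqrt k := by positivity
  have n2 : 0 ≤ Real.sqrt (2*k) + Real.sqrt j := by positivity
  have h2 : Real.sqrt (j+k) + Real.sqrt k ≤ Real.sqrt (2*k) + Real.sqrt j := by
    calc Real.sqrt (j+k) + Real.sqrt k = Real.sqrt ((Real.sqrt (j+k) + Real.sqrt k)^2) :=
          (Real.sqrt_sq n1).symm
      _ ≤ Real.sqrt ((Real.sqrt (2*k) + Real.sqrt j)^2) := Real.sqrt_le_sqrt hsq
      _ = Real.sqrt (2*k) + Real.sqrt j := Real.sqrt_sq n2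
  linarith



private lemma bern_mgf {p : ℝ} (h0 : 0 ≤ p) (h1 : p ≤ 1) (t : ℝ) :
    (1 - p) + p * Real.exp t ≤ Real.exp (p * t + t ^ 2 / 8) := by
  rcases eq_or_lt_of_le h0 with h | hp
  · rw [← h]
    simpa using Real.one_le_exp (by positivity)
  · set q := 1 - p with hq
    have hq0 : 0 ≤ q := by rw [hq]; linarith
    have hg : ∀ x : ℝ, 0 < q + p * Real.exp x := fun x =>
      add_pos_of_nonneg_of_pos hq0 (by positivity)
    -- derivative of φ
    have hderiv1 : ∀ x : ℝ, HasDerivAt (fun y => p*y + y^2/8 - Real.log (q + p*Real.exp y))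
        (p + x/4 - p*Real.exp x/(q + p*Real.exp x)) x := by
      intro x
      have hgx : HasDerivAt (fun y => q + p*Real.exp y) (p*Real.exp x) x :=
        ((Real.hasDerivAt_exp x).const_mul p).const_add q
      have hlog := hgx.log (ne_of_gt (hg x))
      have ha : HasDerivAt (fun y : ℝ => p*y) p x := by
        simpa using (hasDerivAt_id x).const_mul p
      have hb : HasDerivAt (fun y : ℝ => y^2/8) (x/4) x := by
        have := (hasDerivAt_pow 2 x).div_const 8
        refine this.congr_deriv ?_
        ring
      exact (ha.add hb).sub hlog
    -- derivative of ψ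
    have hderiv2 : ∀ x : ℝ, HasDerivAt (fun y => p + y/4 - p*Real.exp y/(q + p*Real.exp y))
        (1/4 - p*Real.exp x*q/(q + p*Real.exp x)^2) x := by
      intro x
      have hgx : HasDerivAt (fun y => q + p*Real.exp y) (p*Real.exp x) x :=
        ((Real.hasDerivAt_exp x).const_mul p).const_add q
      have hnum : HasDerivAt (fun y => p*Real.exp y) (p*Real.exp x) x :=
        (Real.hasDerivAt_exp x).const_mul p
      have hdiv := hnum.div hgx (ne_of_gt (hg x))
      have hlin : HasDerivAt (fun y : ℝ => p + y/4) (1/4) x := by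
        simpa using ((hasDerivAt_id x).div_const 4).const_add p
      have := hlin.sub hdiv
      refine this.congr_deriv ?_
      have hne := ne_of_gt (hg x)
      field_simp
      ring
    -- ψ monotone
    have hmono : Monotone (fun y => p + y/4 - p*Real.exp y/(q + p*Real.exp y)) := by
      apply monotone_of_deriv_nonneg
      · exact fun x => (hderiv2 x).differentiableAt
      · intro x
        rw [(hderiv2 x).deriv]
        have hgx := hg x
        have hex := Real.exp_pos x
        rw [sub_nonneg, div_le_iff₀ (by positivity)]
        nlinarith [sq_nonneg (q - p*Real.exp x)]
    have hpsi0 : p + (0:ℝ)/4 - p*Real.exp 0/(q + p*Real.exp 0) = 0 := by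
      rw [Real.exp_zero]
      have : q + p*1 = 1 := by rw [hq]; ring
      rw [this]
      simp
    -- φ ≥ 0 everywhere
    have hphi : ∀ x : ℝ, 0 ≤ p*x + x^2/8 - Real.log (q + p*Real.exp x) := by
      have hdiff : Differentiable ℝ (fun y => p*y + y^2/8 - Real.log (q + p*Real.exp y)) :=
        fun x => (hderiv1 x).differentiableAt
      have hphi0 : p*(0:ℝ) + (0:ℝ)^2/8 - Real.log (q + p*Real.exp 0) = 0 := by
        rw [Real.exp_zero]
        have : q + p*1 = 1 := by rw [hq]; ring
        rw [this]
        simp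
      intro x
      rcases le_total 0 x with hx | hx
      · have hm : MonotoneOn (fun y => p*y + y^2/8 - Real.log (q + p*Real.exp y)) (Set.Ici 0) := by
          apply monotoneOn_of_deriv_nonneg (convex_Ici 0) hdiff.continuous.continuousOn
            hdiff.differentiableOn
          intro y hy
          rw [(hderiv1 y).deriv]
          have : (0:ℝ) ≤ y := le_of_lt (by simpa using hy)
          have := hmono this
          simp only at this
          linarith [hpsi0, this]
        have := hm (Set.self_mem_Ici) (Set.mem_Ici.mpr hx) hx
        simp only at this
        linarith [hphi0, this]
      · have hm : AntitoneOn (fun y => p*y + y^2/8 - Real.log (q + p*Real.exp y)) (Set.Iic 0) := by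
          apply antitoneOn_of_deriv_nonpos (convex_Iic 0) hdiff.continuous.continuousOn
            hdiff.differentiableOn
          intro y hy
          rw [(hderiv1 y).deriv]
          have hy0 : y ≤ (0:ℝ) := le_of_lt (by simpa using hy)
          have := hmono hy0
          simp only at this
          linarith [hpsi0, this]
        have := hm (Set.mem_Iic.mpr hx) (Set.self_mem_Iic) hx
        simp only at this
        linarith [hphi0, this]
    have key := hphi t
    have hgt := hg t
    have hlog : Real.log (q + p*Real.exp t) ≤ p*t + t^2/8 := by linarith
    calc (1-p) + p*Real.exp t = q + p*Real.exp t := by rw [hq]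
      _ ≤ Real.exp (p*t + t^2/8) := by
          rw [← Real.exp_log hgt]
          exact Real.exp_le_exp.mpr hlog

private lemma pr_nonneg {c : ℝ} (hc : 0 ≤ c) (n i : ℕ) : 0 ≤ pr c n i := by
  unfold pr; split
  · norm_num
  · positivity

private lemma pr_le_one {c : ℝ} (hc : 0 < c) (n i : ℕ) : pr c n i ≤ 1 := by
  unfold pr; split
  · exact le_refl 1
  · rename_i h
    push_neg at h
    have hs : Real.sqrt (Real.log n / i) ≤ 1/(4*c) := by
      rcases le_or_gt (Real.log n) 0 with hL | hL
      · have h0 : Real.log n / i ≤ 0 := div_nonpos_iff.mpr (Or.inr ⟨hL, by positivity⟩)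
        rw [Real.sqrt_eq_zero_of_nonpos h0]
        positivity
      · have hi0 : (0:ℝ) < i := by nlinarith
        have hdiv : Real.log n / i ≤ 1/(16*c^2) := by
          rw [div_le_div_iff₀ hi0 (by positivity)]
          nlinarith
        calc Real.sqrt (Real.log n / i) ≤ Real.sqrt (1/(16*c^2)) := Real.sqrt_le_sqrt hdiv
          _ = 1/(4*c) := by
              rw [show (1/(16*c^2) : ℝ) = (1/(4*c))^2 by field_simp; ring]
              exact Real.sqrt_sq (by positivity)
    have hcc : c * (1/(4*c)) = 1/4 := by field_simp
    linarith [mul_le_mul_of_nonneg_left hs hc.le, hcc]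

set_option maxHeartbeats 1000000 in
private lemma core_estimate (m k j : ℕ) (C : ℝ) (hm : 100 ≤ m) (hmk : m + 1 ≤ k) (hkj : k ≤ j)
    (hC1 : Real.sqrt m / 4 ≤ C) (hC2 : C ≤ Real.sqrt ((m:ℝ)+1) / 4) :
    Real.sqrt ((k:ℝ)*((m:ℝ)+1))/4 ≤ (m:ℝ)/2 + C * ((∑ i ∈ Finset.Ico m k, 1/Real.sqrt (i+1))
      - ∑ i ∈ Finset.Ico j (j+k), 1/Real.sqrt (i+1)) := by
  have hC0 : 0 ≤ C := le_trans (by positivity) hC1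
  set A := ∑ i ∈ Finset.Ico m k, 1/Real.sqrt (i+1) with hAdef
  set B := ∑ i ∈ Finset.Ico j (j+k), 1/Real.sqrt (i+1) with hBdef
  have hA : 2*(Real.sqrt ((k:ℝ)+1) - Real.sqrt ((m:ℝ)+1)) ≤ A := by
    have := sum_inv_sqrt_lb m k (by omega)
    push_cast at this ⊢
    exact this
  have hB : B ≤ 2*(Real.sqrt ((j:ℝ)+(k:ℝ)) - Real.sqrt (j:ℝ)) := by
    have := sum_inv_sqrt_ub j (j+k) (by omega)
    push_cast at this ⊢
    exact this
  have hwin : Real.sqrt ((j:ℝ)+(k:ℝ)) - Real.sqrt (j:ℝ)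
      ≤ Real.sqrt (2*(k:ℝ)) - Real.sqrt (k:ℝ) := by
    apply sqrt_window (by positivity)
    exact_mod_cast hkj
  set u := Real.sqrt ((m:ℝ)+1) with hu
  set v := Real.sqrt (m:ℝ) with hv
  set s := Real.sqrt (k:ℝ) with hs
  set w := Real.sqrt ((k:ℝ)+1) with hw
  set r := Real.sqrt (2*(k:ℝ)) with hr
  have hm100 : (100:ℝ) ≤ (m:ℝ) := by exact_mod_cast hm
  have hmk' : (m:ℝ)+1 ≤ (k:ℝ) := by exact_mod_cast hmk
  have hsu : u ≤ s := Real.sqrt_le_sqrt (by linarith)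
  have hws : s ≤ w := Real.sqrt_le_sqrt (by linarith)
  have hu0 : 0 ≤ u := Real.sqrt_nonneg _
  have hv0 : 0 ≤ v := Real.sqrt_nonneg _
  have hs0 : 0 ≤ s := Real.sqrt_nonneg _
  have hrs : r ≤ 1.415*s := by
    rw [hr, Real.sqrt_mul (by norm_num : (0:ℝ) ≤ 2)]
    have h2 : Real.sqrt 2 ≤ 1.415 := by
      rw [show (1.415:ℝ) = Real.sqrt (1.415^2) from (Real.sqrt_sq (by norm_num)).symm]
      exact Real.sqrt_le_sqrt (by norm_num)
    exact mul_le_mul_of_nonneg_right h2 hs0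
  have hvlb : 0.99*u ≤ v := by
    rw [hv, hu, show (0.99:ℝ) = Real.sqrt 0.9801 from by
      rw [show (0.9801:ℝ) = 0.99^2 by norm_num]; exact (Real.sqrt_sq (by norm_num)).symm,
      ← Real.sqrt_mul (by norm_num)]
    exact Real.sqrt_le_sqrt (by nlinarith)
  have hvu : v*u ≤ (m:ℝ) + 1/2 := by
    rw [hv, hu, ← Real.sqrt_mul (by positivity)]
    calc Real.sqrt ((m:ℝ)*((m:ℝ)+1)) ≤ Real.sqrt (((m:ℝ)+1/2)^2) :=
          Real.sqrt_le_sqrt (by nlinarith)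
      _ = (m:ℝ)+1/2 := Real.sqrt_sq (by positivity)
  have hu2 : u^2 = (m:ℝ)+1 := Real.sq_sqrt (by positivity)
  have hus : (101:ℝ) ≤ u*s := by
    have h1 : u*u ≤ u*s := mul_le_mul_of_nonneg_left hsu hu0
    nlinarith
  have htsu : Real.sqrt ((k:ℝ)*((m:ℝ)+1)) = s*u := by
    rw [hs, hu, ← Real.sqrt_mul (by positivity)]
  -- lower bound C*(A-B)
  have hAnn : 0 ≤ 2*(w - u) := by
    have : u ≤ w := le_trans hsu hws
    linarith
  have hCA : (v/4)*(2*(w-u)) ≤ C*A :=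
    mul_le_mul (by linarith) hA hAnn hC0
  have hBnn : 0 ≤ B := by
    apply Finset.sum_nonneg
    intro i _
    positivity
  have hCB : C*B ≤ (u/4)*(2*(r-s)) := by
    have hB2 : B ≤ 2*(r-s) := by linarith
    have hrs0 : 0 ≤ 2*(r-s) := by
      have : s ≤ r := by rw [hs, hr]; exact Real.sqrt_le_sqrt (by linarith)
      linarith
    calc C*B ≤ (u/4)*B := mul_le_mul_of_nonneg_right (by linarith) hBnn
      _ ≤ (u/4)*(2*(r-s)) := mul_le_mul_of_nonneg_left hB2 (by linarith)
  have hvs : 0.99*(u*s) ≤ v*s := by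
    have := mul_le_mul_of_nonneg_right hvlb hs0
    linarith [this]
  have hvw : v*s ≤ v*w := mul_le_mul_of_nonneg_left hws hv0
  have hur : u*r ≤ u*(1.415*s) := mul_le_mul_of_nonneg_left hrs hu0
  rw [htsu]
  have hexp : (v/4)*(2*(w-u)) - (u/4)*(2*(r-s)) = v*w/2 - v*u/2 - u*r/2 + u*s/2 := by ring
  nlinarith [hCA, hCB, hvs, hvw, hur, hvu, hus]

set_option maxHeartbeats 1000000 in
open scoped Classical in
/-- Fix `c > √2`. For the random word of length `n` with independent letters,
where `w_k = 1` with probability `p_k`: for all sufficiently large `n` and all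
integers `k, j` with `16 c² log n < k ≤ j ≤ n - k`, the probability that
`|w[1,k]|₁ < |w[j+1,j+k]|₁` is at most `exp(-c² log n) = n^(-c²)`. -/
theorem random_word_bad_event_prob_bound (c : ℝ) (hc : Real.sqrt 2 < c) :
    ∀ᶠ n : ℕ in Filter.atTop, ∀ k j : ℕ,
      16 * c ^ 2 * Real.log n < (k : ℝ) → k ≤ j → j + k ≤ n →
      (∑ w ∈ Finset.univ.filter (fun w : Fin n → Bool =>
          cnt (ext w) 0 k < cnt (ext w) j (j + k)),
        wordProb c n w) ≤ Real.exp (-(c ^ 2) * Real.log n) := by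
  have hc0 : 0 < c := lt_of_le_of_lt (Real.sqrt_nonneg 2) hc
  have hc2 : 2 < c^2 := by
    nlinarith [Real.sq_sqrt (show (0:ℝ) ≤ 2 by norm_num), Real.sqrt_nonneg 2]
  filter_upwards [Filter.eventually_ge_atTop 100] with n hn
  intro k j hkT hkj hjkn
  set L := Real.log n with hLdef
  have hL4 : (4:ℝ) ≤ L := by
    have h100 : (100:ℝ) ≤ (n:ℝ) := by exact_mod_cast hn
    have hexp4 : Real.exp 4 ≤ 100 := by
      have h1 := Real.exp_one_lt_d9
      have h2 : Real.exp 4 = (Real.exp 1)^4 := by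
        rw [← Real.exp_nat_mul]; norm_num
      have h3 : (Real.exp 1)^4 ≤ 2.7182818286^4 :=
        pow_le_pow_left₀ (Real.exp_pos 1).le h1.le 4
      rw [h2]
      nlinarith
    rw [hLdef, Real.le_log_iff_exp_le (by linarith : (0:ℝ) < (n:ℝ))]
    linarith
  have hL0 : (0:ℝ) ≤ L := by linarith
  set T := 16*c^2*L with hTdef
  have hT0 : (0:ℝ) ≤ T := by nlinarith
  set m := Nat.floor T with hmdef
  have hm100 : 100 ≤ m := by
    apply Nat.le_floor
    push_cast
    nlinarith
  have hmT : (m:ℝ) ≤ T := Nat.floor_le hT0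
  have hTm1 : T < (m:ℝ)+1 := by exact_mod_cast Nat.lt_floor_add_one T
  have hmk : m + 1 ≤ k := by
    have : m < k := (Nat.floor_lt hT0).mpr hkT
    omega
  have hk1 : 1 ≤ k := by omega
  have hk0' : (0:ℝ) < (k:ℝ) := by exact_mod_cast hk1
  -- pr values
  have hpr1' : ∀ i : ℕ, i ≤ m → pr c n i = 1 := by
    intro i hi
    unfold pr
    rw [← hLdef, ← hTdef, if_pos]
    calc (i:ℝ) ≤ (m:ℝ) := by exact_mod_cast hi
      _ ≤ T := hmT
  have hprval : ∀ i : ℕ, m < i → pr c n i = 1/2 + (c*Real.sqrt L)*(1/Real.sqrt i) := by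
    intro i hi
    have hiT : T < (i:ℝ) := by
      calc T < (m:ℝ)+1 := hTm1
        _ ≤ (i:ℝ) := by exact_mod_cast hi
    unfold pr
    rw [← hLdef, ← hTdef, if_neg (by linarith)]
    rw [Real.sqrt_div hL0]
    ring
  have hprnn : ∀ i, 0 ≤ pr c n i := pr_nonneg hc0.le n
  have hprle : ∀ i, pr c n i ≤ 1 := pr_le_one hc0 n
  have hwpnn : ∀ w : Fin n → Bool, 0 ≤ wordProb c n w := by
    intro w
    unfold wordProb
    apply Finset.prod_nonneg
    intro i _
    by_cases h : w i = true
    · rw [if_pos h]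
      exact hprnn _
    · rw [if_neg h]
      linarith [hprle (i.1+1)]
  -- C bounds
  have hC1 : Real.sqrt (m:ℝ)/4 ≤ c*Real.sqrt L := by
    have h1 : Real.sqrt (m:ℝ) ≤ Real.sqrt T := Real.sqrt_le_sqrt hmT
    have h2 : Real.sqrt T = 4*(c*Real.sqrt L) := by
      rw [hTdef, show 16*c^2*L = (4*(c*Real.sqrt L))^2 by
        rw [mul_pow, mul_pow, Real.sq_sqrt hL0]; ring]
      rw [Real.sqrt_sq (by positivity)]
    linarith
  have hC2 : c*Real.sqrt L ≤ Real.sqrt ((m:ℝ)+1)/4 := by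
    have h1 : Real.sqrt T ≤ Real.sqrt ((m:ℝ)+1) := Real.sqrt_le_sqrt (le_of_lt hTm1)
    have h2 : Real.sqrt T = 4*(c*Real.sqrt L) := by
      rw [hTdef, show 16*c^2*L = (4*(c*Real.sqrt L))^2 by
        rw [mul_pow, mul_pow, Real.sq_sqrt hL0]; ring]
      rw [Real.sqrt_sq (by positivity)]
    linarith
  -- sums of pr over the two blocks
  have hX : ∑ i ∈ Finset.Ico 0 k, pr c n (i+1)
      = (m:ℝ) + ((k:ℝ)-(m:ℝ))/2
        + (c*Real.sqrt L)*(∑ i ∈ Finset.Ico m k, 1/Real.sqrt ((i:ℝ)+1)) := by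
    rw [← Finset.sum_Ico_consecutive _ (Nat.zero_le m) (by omega : m ≤ k)]
    have h1 : ∑ i ∈ Finset.Ico 0 m, pr c n (i+1) = (m:ℝ) := by
      rw [Finset.sum_congr rfl (fun i hi => hpr1' (i+1) (by
        rw [Finset.mem_Ico] at hi; omega))]
      simp
    have h2 : ∑ i ∈ Finset.Ico m k, pr c n (i+1)
        = ((k:ℝ)-(m:ℝ))/2 + (c*Real.sqrt L)*(∑ i ∈ Finset.Ico m k, 1/Real.sqrt ((i:ℝ)+1)) := by
      have hterm : ∀ i ∈ Finset.Ico m k,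
          pr c n (i+1) = 1/2 + (c*Real.sqrt L)*(1/Real.sqrt ((i:ℝ)+1)) := by
        intro i hi
        rw [Finset.mem_Ico] at hi
        rw [hprval (i+1) (by omega)]
        push_cast
        ring
      rw [Finset.sum_congr rfl hterm, Finset.sum_add_distrib, Finset.sum_const,
        ← Finset.mul_sum, Nat.card_Ico, nsmul_eq_mul, Nat.cast_sub (by omega)]
      ring
    rw [h1, h2]
    ring
  have hY : ∑ i ∈ Finset.Ico j (j+k), pr c n (i+1)
      = (k:ℝ)/2 + (c*Real.sqrt L)*(∑ i ∈ Finset.Ico j (j+k), 1/Real.sqrt ((i:ℝ)+1)) := by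
    have hterm : ∀ i ∈ Finset.Ico j (j+k),
        pr c n (i+1) = 1/2 + (c*Real.sqrt L)*(1/Real.sqrt ((i:ℝ)+1)) := by
      intro i hi
      rw [Finset.mem_Ico] at hi
      rw [hprval (i+1) (by omega)]
      push_cast
      ring
    rw [Finset.sum_congr rfl hterm, Finset.sum_add_distrib, Finset.sum_const,
      ← Finset.mul_sum, Nat.card_Ico, Nat.add_sub_cancel_left, nsmul_eq_mul]
    ring
  set D := (∑ i ∈ Finset.Ico 0 k, pr c n (i+1)) - ∑ i ∈ Finset.Ico j (j+k), pr c n (i+1)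
    with hDdef
  have hDge : Real.sqrt ((k:ℝ)*((m:ℝ)+1))/4 ≤ D := by
    have hcore := core_estimate m k j (c*Real.sqrt L) hm100 hmk hkj hC1 hC2
    rw [hDdef, hX, hY]
    linarith
  have hD0 : 0 < D := by
    have hsp : 0 < Real.sqrt ((k:ℝ)*((m:ℝ)+1)) := Real.sqrt_pos.mpr (by positivity)
    linarith
  set lam := 2*D/(k:ℝ) with hlamdef
  have hlam0 : 0 < lam := by
    rw [hlamdef]
    exact div_pos (by linarith) hk0'
  set e : ℕ → ℝ := fun i =>
    (if i ∈ Finset.Ico j (j+k) then lam else 0) - (if i ∈ Finset.Ico 0 k then lam else 0)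
    with he
  have hsubX : Finset.Ico 0 k ⊆ Finset.range n := by
    intro x hx; rw [Finset.mem_range]; rw [Finset.mem_Ico] at hx; omega
  have hsubY : Finset.Ico j (j+k) ⊆ Finset.range n := by
    intro x hx; rw [Finset.mem_range]; rw [Finset.mem_Ico] at hx; omega
  have hrestrict : ∀ (f : ℕ → ℝ) (s : Finset ℕ), s ⊆ Finset.range n →
      ∑ i ∈ Finset.range n, (if i ∈ s then f i else 0) = ∑ i ∈ s, f i := by
    intro f s hs
    rw [Finset.sum_ite_mem, Finset.inter_eq_right.mpr hs]
  have hcnt : ∀ (w : Fin n → Bool) (a b : ℕ),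
      ((cnt (ext w) a b : ℕ) : ℝ) = ∑ i ∈ Finset.Ico a b, (if ext w i then (1:ℝ) else 0) := by
    intro w a b
    unfold cnt
    rw [Finset.card_filter]
    push_cast
    apply Finset.sum_congr rfl
    intro i _
    by_cases h : ext w i <;> simp [h]
  calc (∑ w ∈ Finset.univ.filter (fun w : Fin n → Bool =>
          cnt (ext w) 0 k < cnt (ext w) j (j + k)), wordProb c n w)
      ≤ ∑ w ∈ Finset.univ.filter (fun w : Fin n → Bool =>
          cnt (ext w) 0 k < cnt (ext w) j (j + k)),
          wordProb c n w * Real.exp (∑ i ∈ Finset.range n, e i * (if ext w i then (1:ℝ) else 0)) := by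
        apply Finset.sum_le_sum
        intro w hw
        have hbad : cnt (ext w) 0 k < cnt (ext w) j (j+k) := (Finset.mem_filter.mp hw).2
        have hsum : ∑ i ∈ Finset.range n, e i * (if ext w i then (1:ℝ) else 0)
            = lam * (((cnt (ext w) j (j+k)) : ℝ) - ((cnt (ext w) 0 k) : ℝ)) := by
          simp only [he]
          have hterm : ∀ i ∈ Finset.range n,
              ((if i ∈ Finset.Ico j (j+k) then lam else 0)
                - (if i ∈ Finset.Ico 0 k then lam else 0)) * (if ext w i then (1:ℝ) else 0)
              = (if i ∈ Finset.Ico j (j+k) then lam * (if ext w i then (1:ℝ) else 0) else 0)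
                - (if i ∈ Finset.Ico 0 k then lam * (if ext w i then (1:ℝ) else 0) else 0) := by
            intro i _
            by_cases h1 : i ∈ Finset.Ico j (j+k)
            · by_cases h2 : i ∈ Finset.Ico 0 k
              · simp only [if_pos h1, if_pos h2]; ring
              · simp only [if_pos h1, if_neg h2]; ring
            · by_cases h2 : i ∈ Finset.Ico 0 k
              · simp only [if_neg h1, if_pos h2]; ring
              · simp only [if_neg h1, if_neg h2]; ring
          rw [Finset.sum_congr rfl hterm, Finset.sum_sub_distrib,
            hrestrict _ _ hsubY, hrestrict _ _ hsubX, ← Finset.mul_sum, ← Finset.mul_sum,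
            ← hcnt, ← hcnt]
          ring
        rw [hsum]
        nth_rewrite 1 [← mul_one (wordProb c n w)]
        apply mul_le_mul_of_nonneg_left _ (hwpnn w)
        apply Real.one_le_exp
        have h1 : ((cnt (ext w) 0 k) : ℝ) + 1 ≤ ((cnt (ext w) j (j+k)) : ℝ) := by
          exact_mod_cast hbad
        nlinarith
    _ ≤ ∑ w ∈ (Finset.univ : Finset (Fin n → Bool)),
          wordProb c n w * Real.exp (∑ i ∈ Finset.range n, e i * (if ext w i then (1:ℝ) else 0)) := by
        apply Finset.sum_le_sum_of_subset_of_nonneg (Finset.filter_subset _ _)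
        intro w _ _
        exact mul_nonneg (hwpnn w) (Real.exp_pos _).le
    _ = ∏ i : Fin n, ((1 - pr c n (i.1+1)) + pr c n (i.1+1) * Real.exp (e i.1)) := by
        have hterm : ∀ w : Fin n → Bool,
            wordProb c n w * Real.exp (∑ i ∈ Finset.range n, e i * (if ext w i then (1:ℝ) else 0))
            = ∏ i : Fin n, ((if w i then pr c n (i.1+1) else 1 - pr c n (i.1+1))
                * Real.exp (e i.1 * (if w i then (1:ℝ) else 0))) := by
          intro w
          have hext : ∀ i : Fin n, ext w i.1 = w i := by
            intro i
            unfold ext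
            rw [dif_pos i.2]
          have h1 : ∑ i ∈ Finset.range n, e i * (if ext w i then (1:ℝ) else 0)
              = ∑ i : Fin n, e i.1 * (if w i then (1:ℝ) else 0) := by
            rw [← Fin.sum_univ_eq_sum_range (fun i => e i * (if ext w i then (1:ℝ) else 0)) n]
            apply Finset.sum_congr rfl
            intro i _
            rw [hext i]
          rw [h1, Real.exp_sum]
          unfold wordProb
          rw [← Finset.prod_mul_distrib]
        rw [Finset.sum_congr rfl (fun w _ => hterm w)]
        rw [← Fintype.prod_sum (fun (i : Fin n) (b : Bool) =>
          (if b then pr c n (i.1+1) else 1 - pr c n (i.1+1))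
            * Real.exp (e i.1 * (if b then (1:ℝ) else 0)))]
        apply Finset.prod_congr rfl
        intro i _
        rw [Fintype.sum_bool]
        norm_num
        ring
    _ ≤ ∏ i : Fin n, Real.exp (pr c n (i.1+1) * e i.1 + (e i.1)^2/8) := by
        apply Finset.prod_le_prod
        · intro i _
          have h1 := hprle (i.1+1)
          have h2 := hprnn (i.1+1)
          have h3 := (Real.exp_pos (e i.1)).le
          nlinarith
        · intro i _
          exact bern_mgf (hprnn _) (hprle _) _
    _ = Real.exp (∑ i : Fin n, (pr c n (i.1+1) * e i.1 + (e i.1)^2/8)) := (Real.exp_sum _ _).symm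
    _ ≤ Real.exp (-(c^2) * L) := by
        apply Real.exp_le_exp.mpr
        have hsplit : ∑ i : Fin n, (pr c n (i.1+1) * e i.1 + (e i.1)^2/8)
            = ∑ i ∈ Finset.range n, (pr c n (i+1) * e i + (e i)^2/8) :=
          Fin.sum_univ_eq_sum_range (fun i => pr c n (i+1) * e i + (e i)^2/8) n
        rw [hsplit]
        have h1 : ∑ i ∈ Finset.range n, pr c n (i+1) * e i = -(lam * D) := by
          simp only [he]
          have hterm : ∀ i ∈ Finset.range n,
              pr c n (i+1) * ((if i ∈ Finset.Ico j (j+k) then lam else 0)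
                - (if i ∈ Finset.Ico 0 k then lam else 0))
              = (if i ∈ Finset.Ico j (j+k) then lam * pr c n (i+1) else 0)
                - (if i ∈ Finset.Ico 0 k then lam * pr c n (i+1) else 0) := by
            intro i _
            by_cases h1 : i ∈ Finset.Ico j (j+k)
            · by_cases h2 : i ∈ Finset.Ico 0 k
              · simp only [if_pos h1, if_pos h2]; ring
              · simp only [if_pos h1, if_neg h2]; ring
            · by_cases h2 : i ∈ Finset.Ico 0 k
              · simp only [if_neg h1, if_pos h2]; ring
              · simp only [if_neg h1, if_neg h2]; ring
          rw [Finset.sum_congr rfl hterm, Finset.sum_sub_distrib,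
            hrestrict _ _ hsubY, hrestrict _ _ hsubX, ← Finset.mul_sum, ← Finset.mul_sum, hDdef]
          ring
        have hdisj : ∀ i : ℕ, i ∈ Finset.Ico 0 k → i ∈ Finset.Ico j (j+k) → False := by
          intro i h1 h2
          rw [Finset.mem_Ico] at h1 h2
          omega
        have h2 : ∑ i ∈ Finset.range n, (e i)^2 = 2*(k:ℝ)*lam^2 := by
          simp only [he]
          have hterm : ∀ i ∈ Finset.range n,
              ((if i ∈ Finset.Ico j (j+k) then lam else 0)
                - (if i ∈ Finset.Ico 0 k then lam else 0))^2
              = (if i ∈ Finset.Ico j (j+k) then lam^2 else 0)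
                + (if i ∈ Finset.Ico 0 k then lam^2 else 0) := by
            intro i _
            by_cases h1 : i ∈ Finset.Ico j (j+k)
            · by_cases h2 : i ∈ Finset.Ico 0 k
              · exact (hdisj i h2 h1).elim
              · simp only [if_pos h1, if_neg h2]; ring
            · by_cases h2 : i ∈ Finset.Ico 0 k
              · simp only [if_neg h1, if_pos h2]; ring
              · simp only [if_neg h1, if_neg h2]; ring
          rw [Finset.sum_congr rfl hterm, Finset.sum_add_distrib,
            hrestrict _ _ hsubY, hrestrict _ _ hsubX, Finset.sum_const, Finset.sum_const,
            Nat.card_Ico, Nat.card_Ico, Nat.add_sub_cancel_left, Nat.sub_zero,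
            nsmul_eq_mul]
          ring
        have hsum2 : ∑ i ∈ Finset.range n, (pr c n (i+1) * e i + (e i)^2/8)
            = -(lam*D) + (2*(k:ℝ)*lam^2)/8 := by
          rw [Finset.sum_add_distrib, h1, ← Finset.sum_div, h2]
        rw [hsum2, hlamdef]
        have hDD : -(2*D/(k:ℝ)*D) + 2*(k:ℝ)*(2*D/(k:ℝ))^2/8 = -(D^2/(k:ℝ)) := by
          field_simp
          ring
        rw [hDD]
        have hD2 : (k:ℝ)*((m:ℝ)+1)/16 ≤ D^2 := by
          nlinarith [Real.sq_sqrt (show (0:ℝ) ≤ (k:ℝ)*((m:ℝ)+1) by positivity),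
            Real.sqrt_nonneg ((k:ℝ)*((m:ℝ)+1)), hDge, hD0]
        have hcl : c^2*L*(k:ℝ) ≤ D^2 := by
          have hml : c^2*L ≤ ((m:ℝ)+1)/16 := by
            have := hTm1
            rw [hTdef] at this
            linarith
          nlinarith
        have hfin : c^2*L ≤ D^2/(k:ℝ) := by
          rw [le_div_iff₀ hk0']
          linarith
        linarith
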